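/- Global Lipschitz continuity of the inverse diffeomorphism (Proposition 1, inverse map). Let Φ : E → F₁ × F₂, Φ(x) = (h(x), q(x)), be a global C¹ diffeomorphism satisfying the orthonormality conditions, with ‖Dh(x)‖ ≤ B_h for all x, and suppose there is m̲ > 0 with ⟨Dh(x)†v, Dh(x)†v⟩ ≥ m̲‖v‖² for all x ∈ E, v ∈ F₁. Then the inverse map Φ⁻¹ : F₁ × F₂ → E is globally Lipschitz with constant B_h/m̲ + 1 with respect to the ℓ² product norm on F₁ × F₂. -/

import Mathlib

open scoped RealInnerProductSpace
open ContinuousLinearMap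
set_option maxHeartbeats 1000000

/-- Proposition 1, inverse map: Global Lipschitz continuity of
the inverse diffeomorphism `Φ⁻¹` with constant `B_h/m̲ + 1` with respect to the ℓ²
product norm on `F₁ × F₂`. -/
theorem inverse_diffeomorphism_lipschitz
    (n m : ℕ) (hm : 1 ≤ m) (hmn : m < n)
    (h : EuclideanSpace ℝ (Fin n) → EuclideanSpace ℝ (Fin m))
    (q : EuclideanSpace ℝ (Fin n) → EuclideanSpace ℝ (Fin (n - m)))
    (Ψ : EuclideanSpace ℝ (Fin m) × EuclideanSpace ℝ (Fin (n - m)) → EuclideanSpace ℝ (Fin n))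
    (hh : ContDiff ℝ 1 h) (hq : ContDiff ℝ 1 q) (hΨ : ContDiff ℝ 1 Ψ)
    (hleft : ∀ x, Ψ (h x, q x) = x)
    (hright : ∀ p, (h (Ψ p), q (Ψ p)) = p)
    (horth₁ : ∀ x, (fderiv ℝ q x) ∘L (ContinuousLinearMap.adjoint (fderiv ℝ q x))
      = ContinuousLinearMap.id ℝ (EuclideanSpace ℝ (Fin (n - m))))
    (horth₂ : ∀ x, (fderiv ℝ q x) ∘L (ContinuousLinearMap.adjoint (fderiv ℝ h x)) = 0)
    (Bh : ℝ) (hBh : ∀ x, ‖fderiv ℝ h x‖ ≤ Bh)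
    (mlow : ℝ) (hmlow : 0 < mlow)
    (hcoerc : ∀ (x : EuclideanSpace ℝ (Fin n)) (v : EuclideanSpace ℝ (Fin m)),
      ⟪(ContinuousLinearMap.adjoint (fderiv ℝ h x)) v,
        (ContinuousLinearMap.adjoint (fderiv ℝ h x)) v⟫ ≥ mlow * ‖v‖ ^ 2) :
    ∀ p p' : EuclideanSpace ℝ (Fin m) × EuclideanSpace ℝ (Fin (n - m)),
      ‖Ψ p - Ψ p'‖ ≤ (Bh / mlow + 1) * Real.sqrt (‖p.1 - p'.1‖ ^ 2 + ‖p.2 - p'.2‖ ^ 2) := by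
  have hhd : Differentiable ℝ h := hh.differentiable one_ne_zero
  have hqd : Differentiable ℝ q := hq.differentiable one_ne_zero
  have hΨd : Differentiable ℝ Ψ := hΨ.differentiable one_ne_zero
  have Bh0 : 0 ≤ Bh := le_trans (norm_nonneg _) (hBh 0)
  set C := Bh / mlow + 1 with hC
  have hC0 : 0 ≤ C := by positivity
  -- key operator norm bound on the derivative of Ψ
  have key : ∀ r, ‖fderiv ℝ Ψ r‖ ≤ C := by
    intro r
    set x := Ψ r with hx
    set A := fderiv ℝ h x with hA
    set Q := fderiv ℝ q x with hQ
    set L := A.prod Q with hL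
    set M := fderiv ℝ Ψ r with hM
    have hΦx : (h x, q x) = r := hright r
    have hpairdiff : DifferentiableAt ℝ (fun y => (h y, q y)) x := DifferentiableAt.prodMk (hhd x) (hqd x)
    have hpair : fderiv ℝ (fun y => (h y, q y)) x = L := DifferentiableAt.fderiv_prodMk (hhd x) (hqd x)
    -- L ∘ M = id
    have hLM : L.comp M = ContinuousLinearMap.id ℝ _ := by
      have h1 : (fun s => (h (Ψ s), q (Ψ s))) = _root_.id := funext hright
      have h2 : fderiv ℝ ((fun y => (h y, q y)) ∘ Ψ) r = L.comp M := by
        rw [fderiv_comp (x := r) hpairdiff (hΨd r), hpair]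
      have h3 : ((fun y => (h y, q y)) ∘ Ψ) = (fun s => (h (Ψ s), q (Ψ s))) := rfl
      rw [← h2, h3, h1, fderiv_id]
    -- M ∘ L = id
    have hML : M.comp L = ContinuousLinearMap.id ℝ _ := by
      have h1 : (fun y => Ψ (h y, q y)) = _root_.id := funext hleft
      have h2 : fderiv ℝ (Ψ ∘ (fun y => (h y, q y))) x = M.comp L := by
        rw [fderiv_comp (x := x) (hΨd _) hpairdiff, hpair, hΦx]
      have h3 : (Ψ ∘ (fun y => (h y, q y))) = (fun y => Ψ (h y, q y)) := rfl
      rw [← h2, h3, h1, fderiv_id]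
    have hMLapply : ∀ z, M (L z) = z := fun z => DFunLike.congr_fun hML z
    have hLMapply : ∀ u, L (M u) = u := fun u => DFunLike.congr_fun hLM u
    have hQQ : ∀ w, Q (ContinuousLinearMap.adjoint Q w) = w := fun w =>
      DFunLike.congr_fun (horth₁ x) w
    have hQA : ∀ v, Q (ContinuousLinearMap.adjoint A v) = 0 := fun v =>
      DFunLike.congr_fun (horth₂ x) v
    have hAQ : ∀ w, A (ContinuousLinearMap.adjoint Q w) = 0 := by
      have h0 : A.comp (ContinuousLinearMap.adjoint Q) = 0 := by
        have := congrArg ContinuousLinearMap.adjoint (horth₂ x)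
        rwa [ContinuousLinearMap.adjoint_comp, ContinuousLinearMap.adjoint_adjoint,
          map_zero] at this
      exact fun w => DFunLike.congr_fun h0 w
    -- second component bound
    have hM0w : ∀ w, M (0, w) = ContinuousLinearMap.adjoint Q w := by
      intro w
      have hLw : L (ContinuousLinearMap.adjoint Q w) = (0, w) := by
        rw [hL, ContinuousLinearMap.prod_apply, hAQ, hQQ]
      rw [← hLw, hMLapply]
    have hnormQ' : ∀ w, ‖ContinuousLinearMap.adjoint Q w‖ = ‖w‖ := by
      intro w
      have : ⟪ContinuousLinearMap.adjoint Q w, ContinuousLinearMap.adjoint Q w⟫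
          = ⟪w, w⟫ := by
        rw [ContinuousLinearMap.adjoint_inner_left, hQQ]
      rw [real_inner_self_eq_norm_mul_norm, real_inner_self_eq_norm_mul_norm] at this
      exact (mul_self_inj_of_nonneg (norm_nonneg _) (norm_nonneg _)).mp this
    -- first component bound
    have hMv0 : ∀ v, ‖M (v, 0)‖ ≤ Bh / mlow * ‖v‖ := by
      intro v
      set z := M (v, 0) with hz
      have hLz : L z = (v, 0) := hLMapply (v, 0)
      have hAz : A z = v := congrArg Prod.fst hLz
      have hQz : Q z = 0 := congrArg Prod.snd hLz
      set K : Submodule ℝ (EuclideanSpace ℝ (Fin n)) :=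
        LinearMap.range (ContinuousLinearMap.adjoint A : EuclideanSpace ℝ (Fin m) →ₗ[ℝ] EuclideanSpace ℝ (Fin n)) with hK
      set zp : EuclideanSpace ℝ (Fin n) := ((K.orthogonalProjectionOnto z : ↥K) : EuclideanSpace ℝ (Fin n)) with hzp
      have hzpK : zp ∈ K := SetLike.coe_mem _
      obtain ⟨a₀, ha₀⟩ := hzpK
      have hr : z - zp ∈ Kᗮ := Submodule.sub_starProjection_mem_orthogonal (K := K) z
      -- A (z - zp) = 0
      have hAr : A (z - zp) = 0 := by
        have hin : ⟪A (z - zp), A (z - zp)⟫ = 0 := by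
          rw [← ContinuousLinearMap.adjoint_inner_left]
          exact hr _ ⟨A (z - zp), rfl⟩
        exact inner_self_eq_zero.mp hin
      -- Q (z - zp) = 0
      have hQr : Q (z - zp) = 0 := by
        have : Q zp = 0 := by rw [← ha₀]; exact hQA a₀
        rw [map_sub, hQz, this, sub_zero]
      have hrz : z = zp := by
        have hL0 : L (z - zp) = 0 := by
          rw [hL, ContinuousLinearMap.prod_apply, hAr, hQr]; rfl
        have := hMLapply (z - zp)
        rw [hL0, map_zero] at this
        exact (sub_eq_zero.mp this.symm)
      have hza : z = ContinuousLinearMap.adjoint A a₀ := by rw [hrz, ← ha₀]; rfl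
      have hv : v = A (ContinuousLinearMap.adjoint A a₀) := by rw [← hza, hAz]
      have hinner : ⟪ContinuousLinearMap.adjoint A a₀, ContinuousLinearMap.adjoint A a₀⟫
          = ⟪a₀, v⟫ := by
        rw [ContinuousLinearMap.adjoint_inner_left, ← hv]
      have hcoe : mlow * ‖a₀‖ ^ 2 ≤ ‖a₀‖ * ‖v‖ := by
        have h1 := hcoerc x a₀
        rw [hinner] at h1
        exact le_trans h1 (real_inner_le_norm a₀ v)
      have ha0 : ‖a₀‖ ≤ ‖v‖ / mlow := by
        rcases eq_or_lt_of_le (norm_nonneg a₀) with h0 | h0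
        · rw [← h0]; positivity
        · rw [le_div_iff₀ hmlow]
          nlinarith
      have hadj : ‖ContinuousLinearMap.adjoint A‖ = ‖A‖ :=
        ContinuousLinearMap.adjoint.norm_map A
      calc ‖z‖ = ‖ContinuousLinearMap.adjoint A a₀‖ := by rw [hza]
        _ ≤ ‖ContinuousLinearMap.adjoint A‖ * ‖a₀‖ := ContinuousLinearMap.le_opNorm _ _
        _ = ‖A‖ * ‖a₀‖ := by rw [hadj]
        _ ≤ Bh * (‖v‖ / mlow) := mul_le_mul (hBh x) ha0 (norm_nonneg _) Bh0
        _ = Bh / mlow * ‖v‖ := by ring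
    refine ContinuousLinearMap.opNorm_le_bound M hC0 (fun u => ?_)
    have hu : u = (u.1, 0) + (0, u.2) := by
      ext <;> simp
    have hdm : 0 ≤ Bh / mlow := by positivity
    calc ‖M u‖ = ‖M (u.1, 0) + M (0, u.2)‖ := by rw [← map_add, ← hu]
      _ ≤ ‖M (u.1, 0)‖ + ‖M (0, u.2)‖ := norm_add_le _ _
      _ ≤ Bh / mlow * ‖u.1‖ + ‖u.2‖ := by
          have h1 := hMv0 u.1
          have h2 : ‖M (0, u.2)‖ = ‖u.2‖ := by rw [hM0w]; exact hnormQ' u.2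
          linarith
      _ ≤ Bh / mlow * ‖u‖ + ‖u‖ := by
          have h1 : ‖u.1‖ ≤ ‖u‖ := norm_fst_le u
          have h2 : ‖u.2‖ ≤ ‖u‖ := norm_snd_le u
          nlinarith
      _ = C * ‖u‖ := by rw [hC]; ring
  intro p p'
  have hlip : ‖Ψ p - Ψ p'‖ ≤ C * ‖p - p'‖ :=
    (convex_univ : Convex ℝ (Set.univ : Set (EuclideanSpace ℝ (Fin m) ×
        EuclideanSpace ℝ (Fin (n - m))))).norm_image_sub_le_of_norm_fderiv_le
      (fun y _ => hΨd y) (fun y _ => key y) (Set.mem_univ p') (Set.mem_univ p)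
  have hmax : ‖p - p'‖ ≤ Real.sqrt (‖p.1 - p'.1‖ ^ 2 + ‖p.2 - p'.2‖ ^ 2) := by
    rw [Prod.norm_def]
    have e1 : (p - p').1 = p.1 - p'.1 := rfl
    have e2 : (p - p').2 = p.2 - p'.2 := rfl
    rw [e1, e2]
    apply max_le
    · calc ‖p.1 - p'.1‖ = Real.sqrt (‖p.1 - p'.1‖ ^ 2) := (Real.sqrt_sq (norm_nonneg _)).symm
        _ ≤ Real.sqrt (‖p.1 - p'.1‖ ^ 2 + ‖p.2 - p'.2‖ ^ 2) :=
          Real.sqrt_le_sqrt (le_add_of_nonneg_right (by positivity))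
    · calc ‖p.2 - p'.2‖ = Real.sqrt (‖p.2 - p'.2‖ ^ 2) := (Real.sqrt_sq (norm_nonneg _)).symm
        _ ≤ Real.sqrt (‖p.1 - p'.1‖ ^ 2 + ‖p.2 - p'.2‖ ^ 2) :=
          Real.sqrt_le_sqrt (le_add_of_nonneg_left (by positivity))
  calc ‖Ψ p - Ψ p'‖ ≤ C * ‖p - p'‖ := hlip
    _ ≤ C * Real.sqrt (‖p.1 - p'.1‖ ^ 2 + ‖p.2 - p'.2‖ ^ 2) :=
      mul_le_mul_of_nonneg_left hmax hC0
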